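/- Let f: X → ℝ be L-smooth and σ-strongly convex with condition number κ = L/σ, ψ σ₀-strongly convex with σ₀ = L − σ, φ(·) = D_ψ(·, x^(0)), and φ_i(x) = Σ_{j=0}^i a_j (σ/2)‖x − x^(j)‖² + φ(x). Let the iteration be z^(i) = z^(i−1) − a_i∇f(x^(i)), x^(i) = (A^(i−1)/A^(i)) x̂^(i−1) + (a_i/A^(i)) ∇φ*_{i−1}(z^(i−1)), x̂^(i) = Grad(x^(i)), with a_0 = 1 and a_i/A^(i) = (√(4κ+1) − 1)/(2κ). Then f(x̂^(k)) − f(x*) ≤ (1 − (√(4κ+1) − 1)/(2κ))^k · D_ψ(x*, x^(0)). -/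
import Mathlib

open scoped RealInnerProductSpace

private lemma combo_norm_sq' {E : Type*} [NormedAddCommGroup E] [InnerProductSpace ℝ E]
    (q p c : E) (t : ℝ) :
    ‖((1 - t) • q + t • p) - c‖ ^ 2
      = (1 - t) * ‖q - c‖ ^ 2 + t * ‖p - c‖ ^ 2 - t * (1 - t) * ‖p - q‖ ^ 2 := by
  have h1 : ((1 - t) • q + t • p) - c = (1 - t) • (q - c) + t • (p - c) := by module
  have h2 : p - q = (p - c) - (q - c) := by abel
  rw [h1, h2]
  set u := q - c
  set w := p - c
  have e : ∀ v : E, ‖v‖ ^ 2 = ⟪v, v⟫ := fun v => (real_inner_self_eq_norm_sq v).symm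
  rw [e, e, e, e]
  simp only [inner_add_left, inner_add_right, inner_sub_left, inner_sub_right,
    real_inner_smul_left, real_inner_smul_right, real_inner_comm w u]
  ring

private lemma term_combo' {E : Type*} [NormedAddCommGroup E] [InnerProductSpace ℝ E]
    (g c q p : E) (t cf s : ℝ) :
    cf + ⟪g, ((1 - t) • q + t • p) - c⟫ + s * ‖((1 - t) • q + t • p) - c‖ ^ 2
      = (1 - t) * (cf + ⟪g, q - c⟫ + s * ‖q - c‖ ^ 2)
        + t * (cf + ⟪g, p - c⟫ + s * ‖p - c‖ ^ 2)
        - s * (t * (1 - t) * ‖p - q‖ ^ 2) := by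
  rw [combo_norm_sq']
  have h1 : ((1 - t) • q + t • p) - c = (1 - t) • (q - c) + t • (p - c) := by module
  rw [h1, inner_add_right, real_inner_smul_right, real_inner_smul_right]
  ring

set_option maxHeartbeats 1000000 in
theorem stmt12 {n : ℕ} (X : Set (EuclideanSpace ℝ (Fin n)))
    (hXcl : IsClosed X) (hXcvx : Convex ℝ X)
    (f : EuclideanSpace ℝ (Fin n) → ℝ)
    (gf : EuclideanSpace ℝ (Fin n) → EuclideanSpace ℝ (Fin n))
    (L σ : ℝ) (hσ : 0 < σ) (hσL : σ < L)
    (hsmooth : ∀ p ∈ X, ∀ q ∈ X,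
      f q ≤ f p + ⟪gf p, q - p⟫ + L / 2 * ‖q - p‖ ^ 2)
    (hfstrong : ∀ p ∈ X, ∀ q ∈ X,
      f q ≥ f p + ⟪gf p, q - p⟫ + σ / 2 * ‖q - p‖ ^ 2)
    (ψ : EuclideanSpace ℝ (Fin n) → ℝ)
    (gψ : EuclideanSpace ℝ (Fin n) → EuclideanSpace ℝ (Fin n))
    (hψstrong : ∀ p ∈ X, ∀ q ∈ X,
      ψ q ≥ ψ p + ⟪gψ p, q - p⟫ + (L - σ) / 2 * ‖q - p‖ ^ 2)
    (xstar : EuclideanSpace ℝ (Fin n)) (hxstarX : xstar ∈ X)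
    (hxstarmin : ∀ y ∈ X, f xstar ≤ f y)
    (z x xh : ℕ → EuclideanSpace ℝ (Fin n))
    (hx0X : x 0 ∈ X)
    (φ : EuclideanSpace ℝ (Fin n) → ℝ)
    (hφ : ∀ p, φ p = ψ p - ψ (x 0) - ⟪gψ (x 0), p - x 0⟫)
    (a A : ℕ → ℝ)
    (hA : ∀ i, A i = ∑ j ∈ Finset.range (i + 1), a j)
    (φi : ℕ → EuclideanSpace ℝ (Fin n) → ℝ)
    (hφi : ∀ i p, φi i p =
      (∑ j ∈ Finset.range (i + 1), a j * (σ / 2 * ‖p - x j‖ ^ 2)) + φ p)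
    (m : ℕ → EuclideanSpace ℝ (Fin n) → EuclideanSpace ℝ (Fin n))
    (hmX : ∀ i w, m i w ∈ X)
    (hmmax : ∀ i w, IsMaxOn (fun p => ⟪w, p⟫ - φi i p) X (m i w))
    (grad : EuclideanSpace ℝ (Fin n) → EuclideanSpace ℝ (Fin n))
    (hgradX : ∀ p, grad p ∈ X)
    (hgradmin : ∀ p, IsMinOn
      (fun u => ⟪gf p, u - p⟫ + L / 2 * ‖u - p‖ ^ 2) X (grad p))
    (ha0 : a 0 = 1)
    (ha : ∀ i : ℕ, 1 ≤ i →
      a i / A i = (Real.sqrt (4 * (L / σ) + 1) - 1) / (2 * (L / σ)))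
    (hz0 : z 0 = -(a 0) • gf (x 0)) (hxh0 : xh 0 = grad (x 0))
    (hz : ∀ i, z (i + 1) = z i - a (i + 1) • gf (x (i + 1)))
    (hx : ∀ i, x (i + 1) =
      (A i / A (i + 1)) • xh i + (a (i + 1) / A (i + 1)) • m i (z i))
    (hxh : ∀ i, xh (i + 1) = grad (x (i + 1))) :
    ∀ k : ℕ,
      f (xh k) - f xstar ≤
        (1 - (Real.sqrt (4 * (L / σ) + 1) - 1) / (2 * (L / σ))) ^ k *
          (ψ xstar - ψ (x 0) - ⟪gψ (x 0), xstar - x 0⟫) := by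
  set κ := L / σ with hκdef
  set τ := (Real.sqrt (4 * κ + 1) - 1) / (2 * κ) with hτdef
  -- scalar facts about τ
  have hκ : 1 < κ := (one_lt_div hσ).2 hσL
  have hκ0 : 0 < κ := by linarith
  have hs4 : (0:ℝ) ≤ 4 * κ + 1 := by linarith
  have hs : Real.sqrt (4 * κ + 1) ^ 2 = 4 * κ + 1 := Real.sq_sqrt hs4
  have hsnn : 0 ≤ Real.sqrt (4 * κ + 1) := Real.sqrt_nonneg _
  have hsgt : 1 < Real.sqrt (4 * κ + 1) := by nlinarith
  have hτpos : 0 < τ := by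
    rw [hτdef]; apply div_pos (by linarith) (by linarith)
  have hslt : Real.sqrt (4 * κ + 1) < 2 * κ + 1 := by nlinarith
  have hτlt : τ < 1 := by
    rw [hτdef, div_lt_one (by linarith)]; linarith
  have h2κτ : τ * (2 * κ) = Real.sqrt (4 * κ + 1) - 1 := by
    rw [hτdef]; exact div_mul_cancel₀ _ (by positivity)
  have hkey : κ * τ ^ 2 + τ = 1 := by
    have h4 : (4 * κ) * (κ * τ ^ 2 + τ) = (4 * κ) * 1 := by nlinarith [h2κτ, hs]
    exact mul_left_cancel₀ (by positivity) h4
  have hLτ : L * τ ^ 2 = σ * (1 - τ) := by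
    have h5 : L / σ * τ ^ 2 + τ = 1 := hkey
    field_simp at h5
    nlinarith [h5]
  -- facts about A and a
  have hA0 : A 0 = 1 := by rw [hA]; simp [ha0]
  have hAsucc : ∀ i, A (i + 1) = A i + a (i + 1) := by
    intro i; rw [hA, hA, Finset.sum_range_succ]
  have hAne : ∀ i, A (i + 1) ≠ 0 := by
    intro i hc
    have := ha (i + 1) (by omega)
    rw [hc, div_zero] at this
    exact absurd this.symm (ne_of_gt hτpos)
  have haτ : ∀ i, a (i + 1) = τ * A (i + 1) := by
    intro i
    have h1 := ha (i + 1) (by omega)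
    rw [div_eq_iff (hAne i)] at h1
    linarith [h1]
  have hArec : ∀ i, A (i + 1) * (1 - τ) = A i := by
    intro i
    linear_combination hAsucc i + haτ i
  have hAinv : ∀ i, A i * (1 - τ) ^ i = 1 := by
    intro i; induction i with
    | zero => simp [hA0]
    | succ i ih =>
      calc A (i + 1) * (1 - τ) ^ (i + 1)
          = (A (i + 1) * (1 - τ)) * (1 - τ) ^ i := by ring
        _ = A i * (1 - τ) ^ i := by rw [hArec]
        _ = 1 := ih
  have hτ1pos : 0 < 1 - τ := by linarith
  have hApos : ∀ i, 0 < A i := by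
    intro i
    have h1 := hAinv i
    have h2 : 0 < (1 - τ) ^ i := pow_pos hτ1pos i
    nlinarith
  have hapos : ∀ i, 0 < a i := by
    intro i
    cases i with
    | zero => rw [ha0]; norm_num
    | succ i => rw [haτ i]; exact mul_pos hτpos (hApos (i + 1))
  have hτeq2 : ∀ i, A i / A (i + 1) = 1 - τ := by
    intro i
    rw [← hArec i, mul_comm, mul_div_assoc, div_self (hAne i), mul_one]
  have hτeq : ∀ i, a (i + 1) / A (i + 1) = τ := by
    intro i; rw [haτ i, mul_div_assoc, div_self (hAne i), mul_one]
  -- membership facts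
  have hxhX : ∀ i, xh i ∈ X := by
    intro i; cases i with
    | zero => rw [hxh0]; exact hgradX _
    | succ i => rw [hxh i]; exact hgradX _
  have hxX : ∀ i, x i ∈ X := by
    intro i; cases i with
    | zero => exact hx0X
    | succ i =>
      rw [hx i, hτeq2 i, hτeq i]
      exact hXcvx (hxhX i) (hmX i (z i)) (by linarith) (le_of_lt hτpos)
        (by ring)
  -- z as a sum
  have hzsum : ∀ k, z k = -∑ j ∈ Finset.range (k + 1), a j • gf (x j) := by
    intro k; induction k with
    | zero => rw [hz0]; simp
    | succ k ih =>
      rw [hz k, ih, Finset.sum_range_succ (fun j => a j • gf (x j)) (k + 1)]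
      module
  -- the estimate function ζ
  obtain ⟨ζ, hζdef⟩ : ∃ ζ : ℕ → EuclideanSpace ℝ (Fin n) → ℝ, ∀ k p, ζ k p =
      (∑ j ∈ Finset.range (k + 1),
        a j * (f (x j) + ⟪gf (x j), p - x j⟫ + σ / 2 * ‖p - x j‖ ^ 2)) + φ p :=
    ⟨_, fun _ _ => rfl⟩
  -- ζ in terms of φi and z
  have hζsplit : ∀ k p, ζ k p =
      (∑ j ∈ Finset.range (k + 1), a j * (f (x j) - ⟪gf (x j), x j⟫))
        - ⟪z k, p⟫ + φi k p := by
    intro k p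
    rw [hζdef, hφi, hzsum]
    simp only [inner_neg_left, sum_inner, real_inner_smul_left, neg_neg, sub_neg_eq_add]
    rw [Finset.sum_congr rfl (fun j _ => by
      rw [inner_sub_right]
      ring : ∀ j ∈ Finset.range (k + 1),
        a j * (f (x j) + ⟪gf (x j), p - x j⟫ + σ / 2 * ‖p - x j‖ ^ 2)
          = (a j * (f (x j) - ⟪gf (x j), x j⟫) + a j * ⟪gf (x j), p⟫
            + a j * (σ / 2 * ‖p - x j‖ ^ 2)))]
    rw [Finset.sum_add_distrib, Finset.sum_add_distrib]
    ring
  -- v k minimizes ζ k over X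
  have hvmin : ∀ k, ∀ p ∈ X, ζ k (m k (z k)) ≤ ζ k p := by
    intro k p hp
    have h1 : ⟪z k, p⟫ - φi k p ≤ ⟪z k, m k (z k)⟫ - φi k (m k (z k)) :=
      isMaxOn_iff.mp (hmmax k (z k)) p hp
    have h2 := hζsplit k p
    have h3 := hζsplit k (m k (z k))
    linarith
  -- convexity combination inequality for φ
  have hφcomb : ∀ p ∈ X, ∀ q ∈ X, ∀ t ∈ Set.Icc (0:ℝ) 1,
      φ ((1 - t) • q + t • p) ≤ (1 - t) * φ q + t * φ p
        - (L - σ) / 2 * (t * (1 - t) * ‖p - q‖ ^ 2) := by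
    intro p hp q hq t ht
    obtain ⟨ht0, ht1⟩ := ht
    set r := (1 - t) • q + t • p with hrdef
    have hrX : r ∈ X := hXcvx hq hp (by linarith) ht0 (by ring)
    have h1 := hψstrong r hrX q hq
    have h2 := hψstrong r hrX p hp
    have hqr : q - r = t • (q - p) := by rw [hrdef]; module
    have hpr : p - r = (1 - t) • (p - q) := by rw [hrdef]; module
    have hnq : ‖q - r‖ ^ 2 = t ^ 2 * ‖p - q‖ ^ 2 := by
      rw [hqr, norm_smul, Real.norm_eq_abs, abs_of_nonneg ht0, mul_pow,
        norm_sub_rev q p]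
    have hnp : ‖p - r‖ ^ 2 = (1 - t) ^ 2 * ‖p - q‖ ^ 2 := by
      rw [hpr, norm_smul, Real.norm_eq_abs, abs_of_nonneg (by linarith), mul_pow]
    have hiq : ⟪gψ r, q - r⟫ = t * ⟪gψ r, q - p⟫ := by
      rw [hqr, real_inner_smul_right]
    have hip : ⟪gψ r, p - r⟫ = (1 - t) * ⟪gψ r, p - q⟫ := by
      rw [hpr, real_inner_smul_right]
    have hflip : ⟪gψ r, q - p⟫ = -⟪gψ r, p - q⟫ := by
      rw [← inner_neg_right]; congr 1; abel
    have hlin : ⟪gψ (x 0), r - x 0⟫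
        = (1 - t) * ⟪gψ (x 0), q - x 0⟫ + t * ⟪gψ (x 0), p - x 0⟫ := by
      have : r - x 0 = (1 - t) • (q - x 0) + t • (p - x 0) := by rw [hrdef]; module
      rw [this, inner_add_right, real_inner_smul_right, real_inner_smul_right]
    rw [hφ, hφ, hφ, hlin]
    rw [hnq, hiq, hflip] at h1
    rw [hnp, hip] at h2
    nlinarith [mul_le_mul_of_nonneg_left h1.le (by linarith : (0:ℝ) ≤ 1 - t),
      mul_le_mul_of_nonneg_left h2.le ht0]
  -- convexity combination inequality for ζ
  have hζcomb : ∀ k, ∀ p ∈ X, ∀ q ∈ X, ∀ t ∈ Set.Icc (0:ℝ) 1,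
      ζ k ((1 - t) • q + t • p) ≤ (1 - t) * ζ k q + t * ζ k p
        - (σ * A k + (L - σ)) / 2 * (t * (1 - t) * ‖p - q‖ ^ 2) := by
    intro k p hp q hq t ht
    have hsum : (∑ j ∈ Finset.range (k + 1),
        a j * (f (x j) + ⟪gf (x j), ((1 - t) • q + t • p) - x j⟫
          + σ / 2 * ‖((1 - t) • q + t • p) - x j‖ ^ 2))
        = (1 - t) * (∑ j ∈ Finset.range (k + 1),
            a j * (f (x j) + ⟪gf (x j), q - x j⟫ + σ / 2 * ‖q - x j‖ ^ 2))
          + t * (∑ j ∈ Finset.range (k + 1),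
            a j * (f (x j) + ⟪gf (x j), p - x j⟫ + σ / 2 * ‖p - x j‖ ^ 2))
          - σ * A k / 2 * (t * (1 - t) * ‖p - q‖ ^ 2) := by
      have e1 : σ * A k / 2 * (t * (1 - t) * ‖p - q‖ ^ 2)
          = ∑ j ∈ Finset.range (k + 1),
              a j * (σ / 2 * (t * (1 - t) * ‖p - q‖ ^ 2)) := by
        rw [← Finset.sum_mul, ← hA]
        ring
      rw [Finset.mul_sum, Finset.mul_sum, e1, ← Finset.sum_add_distrib,
        ← Finset.sum_sub_distrib]
      refine Finset.sum_congr rfl (fun j _ => ?_)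
      rw [term_combo' (gf (x j)) (x j) q p t (f (x j)) (σ / 2)]
      ring
    have hphi := hφcomb p hp q hq t ht
    rw [hζdef, hζdef, hζdef, hsum]
    linarith
  -- strong minimality of v k
  have hζgrowth : ∀ k, ∀ p ∈ X,
      ζ k (m k (z k)) + (σ * A k + (L - σ)) / 2 * ‖p - m k (z k)‖ ^ 2 ≤ ζ k p := by
    intro k p hp
    obtain ⟨v, hvdef, hvX⟩ : ∃ v, v = m k (z k) ∧ v ∈ X := ⟨_, rfl, hmX k (z k)⟩
    rw [← hvdef]
    have hApk := hApos k
    obtain ⟨s, hsdef⟩ : ∃ s, s = σ * A k + (L - σ) := ⟨_, rfl⟩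
    rw [← hsdef]
    have hspos : 0 < s := by rw [hsdef]; nlinarith
    by_cases hpv : ‖p - v‖ ^ 2 = 0
    · rw [hpv, mul_zero, add_zero, hvdef]
      exact hvmin k p hp
    · have hN : 0 < ‖p - v‖ ^ 2 := lt_of_le_of_ne (by positivity) (Ne.symm hpv)
      by_contra hcon
      push_neg at hcon
      obtain ⟨δ, hδdef⟩ : ∃ δ, δ = ζ k v + s / 2 * ‖p - v‖ ^ 2 - ζ k p := ⟨_, rfl⟩
      have hδpos : 0 < δ := by rw [hδdef]; linarith
      obtain ⟨t, htdef⟩ : ∃ t, t = min (1/2 : ℝ) (δ / (s * ‖p - v‖ ^ 2)) := ⟨_, rfl⟩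
      have ht0 : 0 < t := by
        rw [htdef]; exact lt_min (by norm_num) (by positivity)
      have ht1 : t ≤ 1/2 := by rw [htdef]; exact min_le_left _ _
      have htδ : t * (s * ‖p - v‖ ^ 2) ≤ δ := by
        rw [htdef]
        calc min (1/2 : ℝ) (δ / (s * ‖p - v‖ ^ 2)) * (s * ‖p - v‖ ^ 2)
            ≤ (δ / (s * ‖p - v‖ ^ 2)) * (s * ‖p - v‖ ^ 2) :=
              mul_le_mul_of_nonneg_right (min_le_right _ _) (by positivity)
          _ = δ := div_mul_cancel₀ _ (by positivity)
      have hcomb := hζcomb k p hp v hvX t ⟨le_of_lt ht0, by linarith⟩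
      rw [← hsdef] at hcomb
      have hmin := hvmin k ((1 - t) • v + t • p)
        (hXcvx hvX hp (by linarith) (le_of_lt ht0) (by ring))
      rw [← hvdef] at hmin
      have h6 : t * ζ k v + s / 2 * (t * (1 - t) * ‖p - v‖ ^ 2) ≤ t * ζ k p := by
        linarith [hmin, hcomb]
      have h7 : ζ k v + s / 2 * ((1 - t) * ‖p - v‖ ^ 2) ≤ ζ k p := by
        have h7' : t * (ζ k v + s / 2 * ((1 - t) * ‖p - v‖ ^ 2)) ≤ t * ζ k p := by
          nlinarith [h6]
        exact le_of_mul_le_mul_left h7' ht0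
      have h8 : s / 2 * (t * ‖p - v‖ ^ 2) ≤ δ / 2 := by linarith [htδ]
      linarith [h7, h8, hδdef, hδpos]
  -- descent property of the gradient step
  have hgradstep : ∀ p ∈ X, ∀ u ∈ X,
      f (grad p) ≤ f p + ⟪gf p, u - p⟫ + L / 2 * ‖u - p‖ ^ 2 := by
    intro p hp u hu
    have h1 := hsmooth p hp (grad p) (hgradX p)
    have h2 : ⟪gf p, grad p - p⟫ + L / 2 * ‖grad p - p‖ ^ 2
        ≤ ⟪gf p, u - p⟫ + L / 2 * ‖u - p‖ ^ 2 := isMinOn_iff.mp (hgradmin p) u hu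
    linarith
  -- the main invariant
  have hmain : ∀ k, ∀ p ∈ X, A k * f (xh k) ≤ ζ k p := by
    intro k
    induction k with
    | zero =>
      intro p hp
      have h1 : f (xh 0) ≤ f (x 0) + ⟪gf (x 0), p - x 0⟫ + L / 2 * ‖p - x 0‖ ^ 2 := by
        rw [hxh0]; exact hgradstep (x 0) hx0X p hp
      have h2 := hψstrong (x 0) hx0X p hp
      have h3 : φ p ≥ (L - σ) / 2 * ‖p - x 0‖ ^ 2 := by rw [hφ]; linarith
      rw [hζdef, hA0, Finset.sum_range_one, ha0]
      linarith
    | succ k ih =>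
      intro p hp
      obtain ⟨v, hvdef, hvX⟩ : ∃ v, v = m k (z k) ∧ v ∈ X := ⟨_, rfl, hmX k (z k)⟩
      obtain ⟨x1, hx1def, hx1X⟩ : ∃ x1, x1 = x (k + 1) ∧ x1 ∈ X :=
        ⟨_, rfl, hxX (k + 1)⟩
      obtain ⟨g, hgdef⟩ : ∃ g, g = gf x1 := ⟨_, rfl⟩
      -- decompose ζ (k+1)
      have h1 : ζ (k + 1) p = ζ k p
          + a (k + 1) * (f x1 + ⟪g, p - x1⟫ + σ / 2 * ‖p - x1‖ ^ 2) := by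
        rw [hgdef, hx1def, hζdef, hζdef, Finset.sum_range_succ]
        ring
      -- quadratic lower bound on ζ k p
      have h2g := hζgrowth k p hp
      rw [← hvdef] at h2g
      have h2 : A k * f (xh k) + (σ * A k + (L - σ)) / 2 * ‖p - v‖ ^ 2 ≤ ζ k p := by
        linarith [ih v hvX, h2g]
      -- convexity of f between xh k and x1
      have h3 : f x1 + ⟪g, xh k - x1⟫ ≤ f (xh k) := by
        have hst := hfstrong x1 hx1X (xh k) (hxhX k)
        rw [← hgdef] at hst
        have hnn : 0 ≤ σ / 2 * ‖xh k - x1‖ ^ 2 := by positivity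
        linarith
      -- vector identity
      have hvec : (A k + a (k + 1)) • x1 = A k • xh k + a (k + 1) • v := by
        rw [hx1def, hvdef, hx k, ← hAsucc k, smul_add, smul_smul, smul_smul,
          mul_div_cancel₀ _ (hAne k), mul_div_cancel₀ _ (hAne k)]
      have hinner : A k * ⟪g, xh k - x1⟫ + a (k + 1) * ⟪g, p - x1⟫
          = a (k + 1) * ⟪g, p - v⟫ := by
        have hv2 : A k • (xh k - x1) + a (k + 1) • (p - x1) = a (k + 1) • (p - v) := by
          linear_combination (norm := module) -hvec
        calc A k * ⟪g, xh k - x1⟫ + a (k + 1) * ⟪g, p - x1⟫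
            = ⟪g, A k • (xh k - x1) + a (k + 1) • (p - x1)⟫ := by
              rw [inner_add_right, real_inner_smul_right, real_inner_smul_right]
          _ = ⟪g, a (k + 1) • (p - v)⟫ := by rw [hv2]
          _ = a (k + 1) * ⟪g, p - v⟫ := real_inner_smul_right _ _ _
      -- gradient step from x1 towards u
      obtain ⟨u, hudef⟩ : ∃ u : EuclideanSpace ℝ (Fin n),
          u = (1 - τ) • xh k + τ • p := ⟨_, rfl⟩
      have huX : u ∈ X := by
        rw [hudef]
        exact hXcvx (hxhX k) hp (by linarith) (le_of_lt hτpos) (by ring)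
      have hux1 : u - x1 = τ • (p - v) := by
        rw [hudef, hx1def, hvdef, hx k, hτeq2 k, hτeq k]
        module
      have hxhg : xh (k + 1) = grad x1 := by rw [hxh k, hx1def]
      have h5 : f (xh (k + 1))
          ≤ f x1 + τ * ⟪g, p - v⟫ + L / 2 * (τ ^ 2 * ‖p - v‖ ^ 2) := by
        have h5' := hgradstep x1 hx1X u huX
        rw [← hgdef, ← hxhg, hux1, real_inner_smul_right, norm_smul,
          Real.norm_eq_abs, abs_of_nonneg (le_of_lt hτpos), mul_pow] at h5'
        exact h5'
      -- scalar relations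
      have hA1τ : A (k + 1) * τ = a (k + 1) := by rw [haτ k]; ring
      have hALτ : A (k + 1) * (L * τ ^ 2) = σ * A k := by
        rw [hLτ, ← hArec k]; ring
      have hA1pos := hApos (k + 1)
      have h6 : A (k + 1) * f (xh (k + 1))
          ≤ A (k + 1) * f x1 + a (k + 1) * ⟪g, p - v⟫ + σ * A k / 2 * ‖p - v‖ ^ 2 := by
        calc A (k + 1) * f (xh (k + 1))
            ≤ A (k + 1) * (f x1 + τ * ⟪g, p - v⟫ + L / 2 * (τ ^ 2 * ‖p - v‖ ^ 2)) :=
              mul_le_mul_of_nonneg_left h5 (le_of_lt hA1pos)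
          _ = A (k + 1) * f x1 + a (k + 1) * ⟪g, p - v⟫ + σ * A k / 2 * ‖p - v‖ ^ 2 := by
              linear_combination ⟪g, p - v⟫ * hA1τ + (‖p - v‖ ^ 2 / 2) * hALτ
      have h7 : A k * (f x1 + ⟪g, xh k - x1⟫) ≤ A k * f (xh k) :=
        mul_le_mul_of_nonneg_left h3 (le_of_lt (hApos k))
      have h8 : 0 ≤ a (k + 1) * (σ / 2 * ‖p - x1‖ ^ 2) := by
        have := hapos (k + 1)
        positivity
      have hAf : A (k + 1) * f x1 = A k * f x1 + a (k + 1) * f x1 := by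
        rw [hAsucc k]; ring
      rw [h1]
      have hLσ : 0 ≤ (L - σ) / 2 * ‖p - v‖ ^ 2 :=
        mul_nonneg (by linarith) (by positivity)
      linarith [h2, h6, h7, h8, hinner, hAf, hLσ]
  -- conclusion
  intro k
  have h1 := hmain k xstar hxstarX
  have h2 : ζ k xstar ≤ A k * f xstar + φ xstar := by
    rw [hζdef]
    have h3 : ∀ j ∈ Finset.range (k + 1),
        a j * (f (x j) + ⟪gf (x j), xstar - x j⟫ + σ / 2 * ‖xstar - x j‖ ^ 2)
          ≤ a j * f xstar := by
      intro j _
      have := hfstrong (x j) (hxX j) xstar hxstarX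
      exact mul_le_mul_of_nonneg_left (by linarith) (le_of_lt (hapos j))
    have h4 := Finset.sum_le_sum h3
    rw [← Finset.sum_mul, ← hA] at h4
    linarith
  have h5 : A k * (f (xh k) - f xstar) ≤ φ xstar := by nlinarith [h1, h2]
  have hpow : 0 < (1 - τ) ^ k := pow_pos hτ1pos k
  have h6 := mul_le_mul_of_nonneg_left h5 (le_of_lt hpow)
  have h7 := hAinv k
  have h8 : f (xh k) - f xstar ≤ (1 - τ) ^ k * φ xstar := by
    rw [← mul_assoc, mul_comm ((1 - τ) ^ k) (A k), h7, one_mul] at h6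
    exact h6
  rw [hφ] at h8
  exact h8
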